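/- The path P_3 disjoint union with P_2 (the 5-vertex graph with components a path on 3 vertices and an edge) is not complementary vanishing, even though all but one of its vertices has a twin. -/
import Mathlib


/-- `A ∈ S(G)`: real symmetric matrix whose off-diagonal nonzero pattern is `E(G)`. -/
def MatIn {V : Type*} [Fintype V] (G : SimpleGraph V) (A : Matrix V V ℝ) : Prop :=
  A.IsSymm ∧ ∀ i j : V, i ≠ j → (A i j ≠ 0 ↔ G.Adj i j)

/-- `G` is complementary vanishing. -/
def CompVan {V : Type*} [Fintype V] (G : SimpleGraph V) : Prop :=
  ∃ A B : Matrix V V ℝ, MatIn G A ∧ MatIn Gᶜ B ∧ A * B = 0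

theorem stmt_17 :
    ¬ CompVan (SimpleGraph.fromEdgeSet {s(0, 1), s(1, 2), s(3, 4)} : SimpleGraph (Fin 5)) ∧
    ∀ v : Fin 5, v ≠ 1 → ∃ u : Fin 5, u ≠ v ∧
      (SimpleGraph.fromEdgeSet {s(0, 1), s(1, 2), s(3, 4)} : SimpleGraph (Fin 5)).neighborSet u \ {v}
        = (SimpleGraph.fromEdgeSet {s(0, 1), s(1, 2), s(3, 4)} : SimpleGraph (Fin 5)).neighborSet v \ {u} := by
  constructor
  · rintro ⟨A, B, ⟨hAs, hA⟩, ⟨hBs, hB⟩, hAB⟩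
    -- zero entries of A
    have hA02 : A 0 2 = 0 := by
      by_contra h
      have := (hA 0 2 (by decide)).mp h
      simp [SimpleGraph.fromEdgeSet_adj, Sym2.eq_iff] at this
    have hA03 : A 0 3 = 0 := by
      by_contra h
      have := (hA 0 3 (by decide)).mp h
      simp [SimpleGraph.fromEdgeSet_adj, Sym2.eq_iff] at this
    have hA04 : A 0 4 = 0 := by
      by_contra h
      have := (hA 0 4 (by decide)).mp h
      simp [SimpleGraph.fromEdgeSet_adj, Sym2.eq_iff] at this
    -- nonzero entries
    have hA01 : A 0 1 ≠ 0 := (hA 0 1 (by decide)).mpr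
      (by simp [SimpleGraph.fromEdgeSet_adj, Sym2.eq_iff])
    have hB02 : B 0 2 ≠ 0 := (hB 0 2 (by decide)).mpr
      (by simp [SimpleGraph.compl_adj, SimpleGraph.fromEdgeSet_adj, Sym2.eq_iff])
    have hB13 : B 1 3 ≠ 0 := (hB 1 3 (by decide)).mpr
      (by simp [SimpleGraph.compl_adj, SimpleGraph.fromEdgeSet_adj, Sym2.eq_iff])
    have hB12 : B 1 2 = 0 := by
      by_contra h
      have := (hB 1 2 (by decide)).mp h
      simp [SimpleGraph.compl_adj, SimpleGraph.fromEdgeSet_adj, Sym2.eq_iff] at this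
    have e02 : (A * B) 0 2 = 0 := by rw [hAB]; rfl
    have e03 : (A * B) 0 3 = 0 := by rw [hAB]; rfl
    rw [Matrix.mul_apply, Fin.sum_univ_five] at e02 e03
    have hA00 : A 0 0 = 0 := by
      rw [hA02, hA03, hA04, hB12] at e02
      simp at e02
      rcases e02 with h | h
      · exact h
      · exact absurd h hB02
    rw [hA00, hA02, hA03, hA04] at e03
    simp at e03
    rcases e03 with h | h
    · exact absurd h hA01
    · exact absurd h hB13
  · intro v hv
    fin_cases v
    · exact ⟨2, by decide, by
        ext w
        simp [SimpleGraph.neighborSet, SimpleGraph.fromEdgeSet_adj, Sym2.eq_iff]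
        fin_cases w <;> simp⟩
    · exact absurd rfl hv
    · exact ⟨0, by decide, by
        ext w
        simp [SimpleGraph.neighborSet, SimpleGraph.fromEdgeSet_adj, Sym2.eq_iff]
        fin_cases w <;> simp⟩
    · exact ⟨4, by decide, by
        ext w
        simp [SimpleGraph.neighborSet, SimpleGraph.fromEdgeSet_adj, Sym2.eq_iff]
        fin_cases w <;> simp⟩
    · exact ⟨3, by decide, by
        ext w
        simp [SimpleGraph.neighborSet, SimpleGraph.fromEdgeSet_adj, Sym2.eq_iff]
        fin_cases w <;> simp⟩
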